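/- arXiv:math/0509506 — 5 statements merged into one kernel-verified Lean document; each statement's English description precedes it below -/
import Mathlib

section
/- Let (π, T) be a contractive covariant representation of (A, α) on H, let ρ : A → B(K), W : H → K be as in the extension lemma (W is an isometry with W*ρ(α(a))W = π(a) and WW* commuting with ρ(α(A))). Set Δ* := (I - TT*)^{1/2}, let D* be the closed subspace generated by ρ(A)WΔ*H in K, set D := Δ*W* restricted to D*, and π̂(a) := ρ(a)|D* for a ∈ A. Then the operator matrix V₀ := [[T, D],[0, 0]] on H ⊕ D* satisfies the covariance relation V₀ (π ⊕ π̂)(α(a)) = (π ⊕ π̂)(a) V₀ for all a ∈ A. -/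
set_option synthInstance.maxHeartbeats 1000000
set_option maxHeartbeats 1000000

open ContinuousLinearMap

section AuxCommute

open Polynomial in
lemma commute_aeval_of_commute {B : Type*} [Ring B] [Algebra ℝ B] {a b : B}
    (hab : Commute a b) (p : ℝ[X]) : Commute (aeval a p) b := by
  induction p using Polynomial.induction_on with
  | C r =>
      have hc : Commute (algebraMap ℝ B r) b := Algebra.commutes r b
      simpa using hc
  | add p q hp hq => simpa [map_add] using hp.add_left hq
  | monomial n r hp =>
      have hc : Commute (algebraMap ℝ B r) b := Algebra.commutes r b
      simp only [map_mul, aeval_C, map_pow, aeval_X]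
      exact hc.mul_left (hab.pow_left _)

lemma commute_cfc_of_commute {B : Type*} [CStarAlgebra B] {a b : B}
    (ha : IsSelfAdjoint a) (hab : Commute a b) (f : ℝ → ℝ) :
    Commute (cfc f a) b := by
  by_cases hf : ContinuousOn f (spectrum ℝ a)
  · rw [cfc_apply f a ha hf]
    suffices hkey : ∀ g : C(spectrum ℝ a, ℝ), Commute (cfcHom ha g) b from hkey _
    intro g
    have hclosed : IsClosed {g : C(spectrum ℝ a, ℝ) | Commute (cfcHom ha g) b} := by
      have hc : Continuous fun g : C(spectrum ℝ a, ℝ) =>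
          cfcHom ha g * b - b * cfcHom ha g :=
        ((cfcHom_isClosedEmbedding ha).continuous.mul continuous_const).sub
          (continuous_const.mul (cfcHom_isClosedEmbedding ha).continuous)
      have hset : {g : C(spectrum ℝ a, ℝ) | Commute (cfcHom ha g) b}
          = (fun g : C(spectrum ℝ a, ℝ) => cfcHom ha g * b - b * cfcHom ha g) ⁻¹' {0} := by
        ext g
        simp [Commute, SemiconjBy, sub_eq_zero]
      rw [hset]
      exact isClosed_singleton.preimage hc
    have hsub : (polynomialFunctions (spectrum ℝ a) : Set C(spectrum ℝ a, ℝ))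
        ⊆ {g : C(spectrum ℝ a, ℝ) | Commute (cfcHom ha g) b} := by
      intro g hg
      rw [polynomialFunctions_coe] at hg
      obtain ⟨p, rfl⟩ := hg
      have heq : cfcHom ha (Polynomial.toContinuousMapOnAlgHom (spectrum ℝ a) p)
          = Polynomial.aeval a p := by
        have hcont : ContinuousOn (fun x => Polynomial.eval x p) (spectrum ℝ a) :=
          (Polynomial.continuous p).continuousOn
        rw [← cfc_polynomial p a ha, cfc_apply _ a ha hcont]
        congr 1
      rw [Set.mem_setOf_eq, heq]
      exact commute_aeval_of_commute hab p
    have hdense := polynomialFunctions.topologicalClosure (spectrum ℝ a)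
    have hg : g ∈ closure (polynomialFunctions (spectrum ℝ a) : Set C(spectrum ℝ a, ℝ)) := by
      rw [← Subalgebra.topologicalClosure_coe, hdense]
      simp
    exact closure_minimal hsub hclosed hg
  · rw [cfc_apply_of_not_continuousOn a hf]
    exact Commute.zero_left b

end AuxCommute

variable {H₁ H₂ : Type*}
  [NormedAddCommGroup H₁] [InnerProductSpace ℂ H₁]
  [NormedAddCommGroup H₂] [InnerProductSpace ℂ H₂]

/-- The operator on the Hilbert space direct sum `H₁ ⊕ H₂` given by the `2 × 2`
operator matrix `[[P, Q], [R, S]]`. -/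
noncomputable def blockOp (P : H₁ →L[ℂ] H₁) (Q : H₂ →L[ℂ] H₁)
    (R : H₁ →L[ℂ] H₂) (S : H₂ →L[ℂ] H₂) :
    WithLp 2 (H₁ × H₂) →L[ℂ] WithLp 2 (H₁ × H₂) :=
  ((WithLp.prodContinuousLinearEquiv 2 ℂ H₁ H₂).symm.toContinuousLinearMap.comp
      (((P.comp (fst ℂ H₁ H₂) + Q.comp (snd ℂ H₁ H₂))).prod
        (R.comp (fst ℂ H₁ H₂) + S.comp (snd ℂ H₁ H₂)))).comp
    (WithLp.prodContinuousLinearEquiv 2 ℂ H₁ H₂).toContinuousLinearMap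

lemma blockOp_comp (P : H₁ →L[ℂ] H₁) (Q : H₂ →L[ℂ] H₁)
    (R : H₁ →L[ℂ] H₂) (S : H₂ →L[ℂ] H₂)
    (P' : H₁ →L[ℂ] H₁) (Q' : H₂ →L[ℂ] H₁)
    (R' : H₁ →L[ℂ] H₂) (S' : H₂ →L[ℂ] H₂) :
    blockOp P Q R S ∘L blockOp P' Q' R' S' =
      blockOp (P ∘L P' + Q ∘L R') (P ∘L Q' + Q ∘L S')
        (R ∘L P' + S ∘L R') (R ∘L Q' + S ∘L S') := by
  ext x
  simp [blockOp, map_add]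
  exact ⟨by abel, by abel⟩

/-- **Lemma, two-step extension.** Let `(π, T)` be a contractive covariant
representation of `(A, α)` on `H`, let `ρ : A → B(K)` and the isometry `W : H → K` satisfy
`W* ρ(α a) W = π a` (so that `W W*` commutes with `ρ(α(A))`).  Put `Δ* = (I - T T*)^{1/2}`,
let `𝒟*` be the closed subspace of `K` generated by `ρ(A) W Δ* H`, let `D = Δ* W* |𝒟*`, and
let `π̂(a) = ρ(a)|𝒟*`.  Then the operator matrix `V₀ = [[T, D], [0, 0]]` on `H ⊕ 𝒟*`
intertwines `(π ⊕ π̂)(α a)` and `(π ⊕ π̂)(a)` for every `a ∈ A`. -/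
theorem block_covariance
    {A : Type*} [CStarAlgebra A]
    {H : Type*} [NormedAddCommGroup H] [InnerProductSpace ℂ H] [CompleteSpace H]
    {K : Type*} [NormedAddCommGroup K] [InnerProductSpace ℂ K] [CompleteSpace K]
    (α : A →⋆ₐ[ℂ] A) (hα : Function.Injective α) (hαone : α 1 = 1)
    (π : A →⋆ₐ[ℂ] (H →L[ℂ] H))
    (T : H →L[ℂ] H) (hT : ‖T‖ ≤ 1)
    (hcov : ∀ a : A, T ∘L π (α a) = π a ∘L T)
    (ρ : A →⋆ₐ[ℂ] (K →L[ℂ] K))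
    (W : H →L[ℂ] K) (hW : adjoint W ∘L W = 1)
    (hext : ∀ a : A, adjoint W ∘L ρ (α a) ∘L W = π a)
    -- `Δ*`, the defect operator of `T*`:
    (Δstar : H →L[ℂ] H) (hΔ : Δstar = CFC.sqrt (1 - T * star T))
    -- `𝒟* = closure (ρ(A) W Δ* H)`:
    (𝒟 : Submodule ℂ K)
    (h𝒟 : 𝒟 = (Submodule.span ℂ {x : K | ∃ (a : A) (h : H), x = ρ a (W (Δstar h))}).topologicalClosure)
    -- `π̂ a` is the restriction of `ρ a` to `𝒟*`:
    (πhat : A → (𝒟 →L[ℂ] 𝒟))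
    (hπhat : ∀ a : A, 𝒟.subtypeL ∘L πhat a = ρ a ∘L 𝒟.subtypeL) :
    ∀ a : A,
      blockOp T (Δstar ∘L adjoint W ∘L 𝒟.subtypeL) 0 0 ∘L blockOp (π (α a)) 0 0 (πhat (α a)) =
        blockOp (π a) 0 0 (πhat a) ∘L blockOp T (Δstar ∘L adjoint W ∘L 𝒟.subtypeL) 0 0 := by
  intro a
  -- adjoints of the representations
  have hstarρ : ∀ c : A, adjoint (ρ c) = ρ (star c) := by
    intro c
    rw [← star_eq_adjoint, ← map_star]
  have hstarπ : ∀ c : A, adjoint (π c) = π (star c) := by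
    intro c
    rw [← star_eq_adjoint, ← map_star]
  -- Step 1: `ρ(α b) W = W π(b)`.
  have hWcomm : ∀ b : A, ρ (α b) ∘L W = W ∘L π b := by
    intro b
    set S : H →L[ℂ] K := ρ (α b) ∘L W - W ∘L π b with hS
    have t1 : (adjoint W ∘L ρ (α (star b))) ∘L (ρ (α b) ∘L W) = π (star b) ∘L π b := by
      have e : (adjoint W ∘L ρ (α (star b))) ∘L (ρ (α b) ∘L W)
          = adjoint W ∘L (ρ (α (star b)) * ρ (α b)) ∘L W := rfl
      rw [e, ← map_mul, ← map_mul, hext, map_mul]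
      rfl
    have t2 : (adjoint W ∘L ρ (α (star b))) ∘L (W ∘L π b) = π (star b) ∘L π b := by
      have e : (adjoint W ∘L ρ (α (star b))) ∘L (W ∘L π b)
          = (adjoint W ∘L ρ (α (star b)) ∘L W) ∘L π b := rfl
      rw [e, hext]
    have t3 : (π (star b) ∘L adjoint W) ∘L (ρ (α b) ∘L W) = π (star b) ∘L π b := by
      have e : (π (star b) ∘L adjoint W) ∘L (ρ (α b) ∘L W)
          = π (star b) ∘L (adjoint W ∘L ρ (α b) ∘L W) := rfl
      rw [e, hext]
    have t4 : (π (star b) ∘L adjoint W) ∘L (W ∘L π b) = π (star b) ∘L π b := by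
      have e : (π (star b) ∘L adjoint W) ∘L (W ∘L π b)
          = π (star b) ∘L ((adjoint W ∘L W) ∘L π b) := rfl
      rw [e, hW]
      rfl
    have h0 : adjoint S ∘L S = 0 := by
      have e1 : adjoint S = adjoint W ∘L ρ (α (star b)) - π (star b) ∘L adjoint W := by
        rw [hS, map_sub, adjoint_comp, adjoint_comp, hstarρ, hstarπ, ← map_star α]
      rw [e1, hS, sub_comp, comp_sub, comp_sub, t1, t2, t3, t4]
      abel
    have hn := norm_adjoint_comp_self S
    rw [h0, norm_zero] at hn
    have hS0 : S = 0 := norm_eq_zero.mp (mul_self_eq_zero.mp hn.symm)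
    exact sub_eq_zero.mp hS0
  -- Step 2: `W* ρ(α b) = π(b) W*`.
  have hWadj : ∀ b : A, adjoint W ∘L ρ (α b) = π b ∘L adjoint W := by
    intro b
    have h := congrArg adjoint (hWcomm (star b))
    rw [adjoint_comp, adjoint_comp, hstarρ, hstarπ, ← map_star α, star_star] at h
    exact h
  -- Step 3: `π a` commutes with `1 - T T*`, hence with `Δ*`.
  have hTTsa : IsSelfAdjoint (1 - T * star T) := by
    rw [IsSelfAdjoint, star_sub, star_one, star_mul, star_star]
  have hTTpos : (0 : H →L[ℂ] H) ≤ 1 - T * star T := by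
    rw [sub_nonneg, ← CStarAlgebra.norm_le_one_iff_of_nonneg (T * star T)
      (mul_star_self_nonneg T)]
    calc ‖T * star T‖ = ‖T‖ * ‖T‖ := CStarRing.norm_self_mul_star
      _ ≤ 1 := by nlinarith [norm_nonneg T]
  have hcovmul : T * π (α a) = π a * T := hcov a
  have hcovstar : π (α a) * star T = star T * π a := by
    have h : T * π (α (star a)) = π (star a) * T := hcov (star a)
    have h' := congrArg star h
    rw [star_mul, star_mul, ← map_star π, ← map_star π, ← map_star α, star_star] at h'
    exact h'
  have h1 : (T * star T) * π a = π a * (T * star T) := by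
    calc (T * star T) * π a = T * (star T * π a) := mul_assoc _ _ _
      _ = T * (π (α a) * star T) := by rw [hcovstar]
      _ = (T * π (α a)) * star T := (mul_assoc _ _ _).symm
      _ = (π a * T) * star T := by rw [hcovmul]
      _ = π a * (T * star T) := mul_assoc _ _ _
  have hcommTT : Commute (1 - T * star T) (π a) := by
    unfold Commute SemiconjBy
    rw [sub_mul, mul_sub, one_mul, mul_one, h1]
  have hΔcomm : Commute Δstar (π a) := by
    rw [hΔ, CFC.sqrt_eq_cfc, cfc_nnreal_eq_real _ _ hTTpos]
    exact commute_cfc_of_commute hTTsa hcommTT _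
  -- Step 4: the key identity on the dense subspace.
  set Ψ : K →L[ℂ] H :=
    (Δstar ∘L (adjoint W ∘L ρ (α a))) - (π a ∘L (Δstar ∘L adjoint W)) with hΨdef
  have hker : 𝒟 ≤ LinearMap.ker (Ψ : K →ₗ[ℂ] H) := by
    rw [h𝒟]
    apply Submodule.topologicalClosure_minimal
    · rw [Submodule.span_le]
      rintro x ⟨b, h, rfl⟩
      simp only [SetLike.mem_coe, LinearMap.mem_ker]
      have e1 : adjoint W (ρ (α a) (ρ b (W (Δstar h)))) =
          π a (adjoint W (ρ b (W (Δstar h)))) := by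
        have := congrArg (fun f : K →L[ℂ] H => f (ρ b (W (Δstar h)))) (hWadj a)
        simpa using this
      have e2 : Δstar (π a (adjoint W (ρ b (W (Δstar h))))) =
          π a (Δstar (adjoint W (ρ b (W (Δstar h))))) := by
        have := congrArg (fun f : H →L[ℂ] H => f (adjoint W (ρ b (W (Δstar h)))))
          hΔcomm.eq
        simpa [mul_apply] using this
      rw [hΨdef]
      simp only [ContinuousLinearMap.coe_coe, sub_apply, comp_apply]
      rw [e1, e2, sub_self]
    · exact ContinuousLinearMap.isClosed_ker Ψ
  have hD : (Δstar ∘L adjoint W ∘L 𝒟.subtypeL) ∘L πhat (α a) =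
      π a ∘L (Δstar ∘L adjoint W ∘L 𝒟.subtypeL) := by
    ext x
    have h1 : Ψ (x : K) = 0 := hker x.2
    rw [hΨdef] at h1
    simp only [sub_apply, comp_apply, sub_eq_zero] at h1
    have h2 : ((πhat (α a) x : 𝒟) : K) = ρ (α a) (x : K) := by
      have := congrArg (fun f : 𝒟 →L[ℂ] K => f x) (hπhat (α a))
      simpa using this
    simp only [comp_apply, Submodule.subtypeL_apply]
    rw [h2]
    exact h1
  -- Final assembly.
  rw [blockOp_comp, blockOp_comp]
  simp only [comp_zero, zero_comp, add_zero, zero_add]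
  rw [hcov a, hD]
end

section
/- Let (π, T) be a contractive covariant representation of (A, α) on H, Δ := (I - T*T)^{1/2}, and D := closure of ΔH. Define on K := H ⊕ D ⊕ D ⊕ ⋯ the representation η(a) := diag(π(a), π(α(a))|D, π(α²(a))|D, ...) and the operator W whose matrix has T in position (0,0), Δ : H → D in position (1,0), and identity maps I_D in positions (k+1, k) for k ≥ 1, with all other entries zero. Then W is an isometry and Wη(α(a)) = η(a)W for all a ∈ A. -/
set_option synthInstance.maxHeartbeats 1000000
set_option maxHeartbeats 1000000
set_option linter.unusedSectionVars false

open ContinuousLinearMap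

section Aux

variable {H D K : Type*}
  [NormedAddCommGroup H] [InnerProductSpace ℂ H] [CompleteSpace H]
  [NormedAddCommGroup D] [InnerProductSpace ℂ D] [CompleteSpace D]
  [NormedAddCommGroup K] [InnerProductSpace ℂ K] [CompleteSpace K]

/-- If all "matrix components" of a column operator vanish, the operator vanishes. -/
private lemma colzero {V : Type*} [NormedAddCommGroup V] [NormedSpace ℂ V]
    (e : H →L[ℂ] K) (u : ℕ → (D →L[ℂ] K))
    (htotal : (LinearMap.range (e : H →ₗ[ℂ] K) ⊔ ⨆ n, LinearMap.range (u n : D →ₗ[ℂ] K)).topologicalClosure = ⊤)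
    (Z : V →L[ℂ] K)
    (h1 : adjoint e ∘L Z = 0) (h2 : ∀ n, adjoint (u n) ∘L Z = 0) : Z = 0 := by
  ext v
  rw [ContinuousLinearMap.zero_apply]
  have hle : (LinearMap.range (e : H →ₗ[ℂ] K) ⊔ ⨆ n, LinearMap.range (u n : D →ₗ[ℂ] K)) ≤ (ℂ ∙ (Z v))ᗮ := by
    refine sup_le ?_ (iSup_le fun n => ?_)
    · rintro _ ⟨h, rfl⟩
      rw [Submodule.mem_orthogonal']
      intro w hw
      rw [Submodule.mem_span_singleton] at hw
      obtain ⟨c, rfl⟩ := hw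
      have h0 : adjoint e (Z v) = 0 := by
        have := DFunLike.congr_fun h1 v
        simpa using this
      rw [inner_smul_right]
      have hx : (inner ℂ (e h) (Z v) : ℂ) = inner ℂ h (adjoint e (Z v)) := by
        rw [ContinuousLinearMap.adjoint_inner_right]
      rw [ContinuousLinearMap.coe_coe, hx, h0, inner_zero_right, mul_zero]
    · rintro _ ⟨h, rfl⟩
      rw [Submodule.mem_orthogonal']
      intro w hw
      rw [Submodule.mem_span_singleton] at hw
      obtain ⟨c, rfl⟩ := hw
      have h0 : adjoint (u n) (Z v) = 0 := by
        have := DFunLike.congr_fun (h2 n) v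
        simpa using this
      rw [inner_smul_right]
      have hx : (inner ℂ ((u n) h) (Z v) : ℂ) = inner ℂ h (adjoint (u n) (Z v)) := by
        rw [ContinuousLinearMap.adjoint_inner_right]
      rw [ContinuousLinearMap.coe_coe, hx, h0, inner_zero_right, mul_zero]
  have hle' : (LinearMap.range (e : H →ₗ[ℂ] K) ⊔ ⨆ n, LinearMap.range (u n : D →ₗ[ℂ] K)).topologicalClosure
      ≤ (ℂ ∙ (Z v))ᗮ :=
    Submodule.topologicalClosure_minimal _ hle (Submodule.isClosed_orthogonal _)
  rw [htotal] at hle'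
  have hZ : Z v ∈ (ℂ ∙ (Z v))ᗮ := hle' trivial
  rw [Submodule.mem_orthogonal] at hZ
  exact inner_self_eq_zero.mp (hZ (Z v) (Submodule.mem_span_singleton_self _))

/-- An operator on `K` vanishing on all columns vanishes. -/
private lemma vanish
    (e : H →L[ℂ] K) (u : ℕ → (D →L[ℂ] K))
    (htotal : (LinearMap.range (e : H →ₗ[ℂ] K) ⊔ ⨆ n, LinearMap.range (u n : D →ₗ[ℂ] K)).topologicalClosure = ⊤)
    (S : K →L[ℂ] K) (h1 : S ∘L e = 0) (h2 : ∀ n, S ∘L u n = 0) : S = 0 := by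
  have hle : (LinearMap.range (e : H →ₗ[ℂ] K) ⊔ ⨆ n, LinearMap.range (u n : D →ₗ[ℂ] K)) ≤ LinearMap.ker (S : K →ₗ[ℂ] K) := by
    refine sup_le ?_ (iSup_le fun n => ?_)
    · rintro _ ⟨h, rfl⟩
      have := DFunLike.congr_fun h1 h
      simpa [LinearMap.mem_ker] using this
    · rintro _ ⟨h, rfl⟩
      have := DFunLike.congr_fun (h2 n) h
      simpa [LinearMap.mem_ker] using this
  have hle' : (LinearMap.range (e : H →ₗ[ℂ] K) ⊔ ⨆ n, LinearMap.range (u n : D →ₗ[ℂ] K)).topologicalClosure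
      ≤ LinearMap.ker (S : K →ₗ[ℂ] K) :=
    Submodule.topologicalClosure_minimal _ hle (ContinuousLinearMap.isClosed_ker S)
  rw [htotal] at hle'
  ext x
  exact hle' (trivial : x ∈ (⊤ : Submodule ℂ K))

/-- Operators commuting with a nonnegative operator commute with its square root. -/
private lemma commute_sqrt {E : Type*} [NormedAddCommGroup E] [InnerProductSpace ℂ E]
    [CompleteSpace E] {p b : E →L[ℂ] E} (hp : 0 ≤ p)
    (hb : Commute b p) : Commute b (CFC.sqrt p) := by
  have hsa : IsSelfAdjoint p := .of_nonneg hp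
  -- `CFC.sqrt p` lies in the elemental (closed star sub)algebra generated by `p`
  have hmem : CFC.sqrt p ∈ StarAlgebra.elemental ℂ p := by
    have h1 : CFC.sqrt p = cfc (fun z : ℂ => ((NNReal.sqrt z.re.toNNReal : ℝ) : ℂ)) p := by
      rw [CFC.sqrt, cfcₙ_eq_cfc, cfc_nnreal_eq_real _ _ hp, cfc_real_eq_complex _ hsa]
    rw [h1]
    by_cases hc : ContinuousOn (fun z : ℂ => ((NNReal.sqrt z.re.toNNReal : ℝ) : ℂ))
        (spectrum ℂ p)
    · haveI : IsStarNormal p := hsa.isStarNormal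
      rw [cfc_apply (fun z : ℂ => ((NNReal.sqrt z.re.toNNReal : ℝ) : ℂ)) p hsa.isStarNormal hc,
        cfcHom_eq_of_isStarNormal p]
      simp only [StarAlgHom.comp_apply, StarSubalgebra.coe_subtype]
      exact SetLike.coe_mem _
    · rw [cfc_apply_of_not_continuousOn p hc]
      exact zero_mem _
  -- the centralizer of `b` is closed and contains `p`
  have hclosed : IsClosed ((StarSubalgebra.centralizer ℂ {b} :
      StarSubalgebra ℂ (E →L[ℂ] E)) : Set (E →L[ℂ] E)) := by
    rw [StarSubalgebra.coe_centralizer]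
    have hrw : ((({b} : Set (E →L[ℂ] E)) ∪ star {b}).centralizer)
        = ⋂ g ∈ (({b} : Set (E →L[ℂ] E)) ∪ star {b}), {x : E →L[ℂ] E | g * x = x * g} := by
      ext x
      simp [Set.mem_centralizer_iff]
    rw [hrw]
    exact isClosed_biInter fun g _ => isClosed_eq (by fun_prop) (by fun_prop)
  have hpmem : p ∈ StarSubalgebra.centralizer ℂ {b} := by
    rw [StarSubalgebra.mem_centralizer_iff]
    rintro g rfl
    refine ⟨hb.eq, ?_⟩
    have h := congrArg star hb.eq
    rw [star_mul, star_mul, hsa.star_eq] at h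
    exact h.symm
  have hle : StarAlgebra.elemental ℂ p ≤ StarSubalgebra.centralizer ℂ {b} :=
    StarAlgebra.elemental.le_of_mem hclosed hpmem
  have h := (StarSubalgebra.mem_centralizer_iff ℂ).mp (hle hmem) b rfl
  exact h.1

end Aux

/-- **Schaeffer construction.**  Let `(π, T)` be a contractive covariant
representation of `(A, α)` on `H`, `Δ = (I - T* T)^{1/2}` and `D = closure (Δ H)`.  Let
`K = H ⊕ D ⊕ D ⊕ ⋯` be the Hilbert space direct sum, described internally by an isometry
`e : H → K` and isometries `u n : D → K` (`n = 0, 1, 2, …`) with mutually orthogonal ranges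
which together span `K`.  Let `W` be the operator on `K` with matrix having `T` in position
`(0,0)`, `Δ : H → D` in position `(1,0)`, identities `I_D` in positions `(k+1, k)` for
`k ≥ 1`, and zeros elsewhere, and let `η(a)` be the diagonal operator
`diag (π a, π(α a)|D, π(α² a)|D, …)`.  Then `W` is an isometry and `W η(α a) = η(a) W`
for all `a ∈ A`. -/
theorem schaeffer_isometric_dilation
    {A : Type*} [CStarAlgebra A]
    {H : Type*} [NormedAddCommGroup H] [InnerProductSpace ℂ H] [CompleteSpace H]
    {K : Type*} [NormedAddCommGroup K] [InnerProductSpace ℂ K] [CompleteSpace K]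
    (α : A →⋆ₐ[ℂ] A) (hα : Function.Injective α) (hαone : α 1 = 1)
    (π : A →⋆ₐ[ℂ] (H →L[ℂ] H))
    (T : H →L[ℂ] H) (hT : ‖T‖ ≤ 1)
    (hcov : ∀ a : A, T ∘L π (α a) = π a ∘L T)
    -- the defect operator `Δ` and defect space `D`:
    (Δ : H →L[ℂ] H) (hΔ : Δ = CFC.sqrt (1 - star T * T))
    (D : Submodule ℂ H) (hD : D = (LinearMap.range (Δ : H →ₗ[ℂ] H)).topologicalClosure) [CompleteSpace D]
    -- `K = H ⊕ D ⊕ D ⊕ ⋯`, internally: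
    (e : H →L[ℂ] K) (u : ℕ → (D →L[ℂ] K))
    (he : adjoint e ∘L e = 1) (hu : ∀ n, adjoint (u n) ∘L u n = 1)
    (heu : ∀ n, adjoint e ∘L u n = 0)
    (huu : ∀ m n, m ≠ n → adjoint (u m) ∘L u n = 0)
    (htotal : (LinearMap.range (e : H →ₗ[ℂ] K) ⊔ ⨆ n, LinearMap.range (u n : D →ₗ[ℂ] K)).topologicalClosure = ⊤)
    -- the matrix entries of `W`:
    (W : K →L[ℂ] K)
    (hW00 : adjoint e ∘L W ∘L e = T)
    (hW10 : D.subtypeL ∘L (adjoint (u 0) ∘L W ∘L e) = Δ)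
    (hWsub : ∀ k, adjoint (u (k + 1)) ∘L W ∘L u k = 1)
    (hW0n : ∀ n, adjoint e ∘L W ∘L u n = 0)
    (hWn0 : ∀ n, n ≠ 0 → adjoint (u n) ∘L W ∘L e = 0)
    (hWmn : ∀ m n, m ≠ n + 1 → adjoint (u m) ∘L W ∘L u n = 0)
    -- the matrix entries of `η`:
    (η : A → (K →L[ℂ] K))
    (hη00 : ∀ a, adjoint e ∘L η a ∘L e = π a)
    (hηdiag : ∀ a n, D.subtypeL ∘L (adjoint (u n) ∘L η a ∘L u n) =
      π ((⇑α)^[n + 1] a) ∘L D.subtypeL)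
    (hηeu : ∀ a n, adjoint e ∘L η a ∘L u n = 0)
    (hηue : ∀ a n, adjoint (u n) ∘L η a ∘L e = 0)
    (hηuu : ∀ a m n, m ≠ n → adjoint (u m) ∘L η a ∘L u n = 0) :
    adjoint W ∘L W = 1 ∧ ∀ a : A, W ∘L η (α a) = η a ∘L W := by
  -- notation
  set ι : ↥D →L[ℂ] H := D.subtypeL with hι
  set Δ' : H →L[ℂ] ↥D := adjoint (u 0) ∘L W ∘L e with hΔ'def
  clear_value Δ'
  -- adjoints of orthogonality relations
  have hue : ∀ n, adjoint (u n) ∘L e = 0 := by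
    intro n
    have h := congrArg adjoint (heu n)
    rwa [adjoint_comp, adjoint_adjoint, map_zero] at h
  -- cancellation of the injective inclusion ι
  have hcancel : ∀ {V : Type _} [NormedAddCommGroup V] [NormedSpace ℂ V]
      {X Y : V →L[ℂ] ↥D}, ι ∘L X = ι ∘L Y → X = Y := by
    intro V _ _ X Y h
    ext z
    have hz := DFunLike.congr_fun h z
    simp only [ContinuousLinearMap.coe_comp', Function.comp_apply, hι,
      Submodule.subtypeL_apply] at hz
    exact hz
  have hιι : adjoint ι ∘L ι = 1 := by
    rw [hι, Submodule.adjoint_subtypeL]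
    ext x
    simp [Submodule.orthogonalProjection_mem_subspace_eq_self]
  -- positivity of the defect
  have hP : (0 : H →L[ℂ] H) ≤ 1 - star T * T := by
    rw [ContinuousLinearMap.nonneg_iff_isPositive]
    constructor
    · rw [← ContinuousLinearMap.isSelfAdjoint_iff_isSymmetric, IsSelfAdjoint]
      simp [star_sub, star_mul, star_star]
    · intro x
      rw [ContinuousLinearMap.reApplyInnerSelf_apply]
      have h1 : ((1 - star T * T : H →L[ℂ] H) x) = x - (adjoint T) (T x) := by
        simp [ContinuousLinearMap.star_eq_adjoint, ContinuousLinearMap.mul_apply]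
      rw [h1, inner_sub_left]
      have h2 : (inner ℂ ((adjoint T) (T x)) x : ℂ) = inner ℂ (T x) (T x) := by
        rw [ContinuousLinearMap.adjoint_inner_left]
      have h3 : ‖T x‖ ≤ ‖x‖ := by
        calc ‖T x‖ ≤ ‖T‖ * ‖x‖ := T.le_opNorm x
        _ ≤ 1 * ‖x‖ := by gcongr
        _ = ‖x‖ := one_mul _
      rw [h2, map_sub, inner_self_eq_norm_sq, inner_self_eq_norm_sq]
      nlinarith [norm_nonneg (T x), norm_nonneg x]
  have hΔsa : IsSelfAdjoint Δ := hΔ ▸ IsSelfAdjoint.of_nonneg (CFC.sqrt_nonneg _)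
  have hΔΔ : Δ ∘L Δ = 1 - star T * T := by
    rw [← ContinuousLinearMap.mul_def, hΔ]
    exact CFC.sqrt_mul_sqrt_self _ hP
  have hΔadj : adjoint Δ = Δ := by
    rw [← ContinuousLinearMap.star_eq_adjoint]
    exact hΔsa.star_eq
  have hΔ'Δ' : adjoint Δ' ∘L Δ' = 1 - star T * T := by
    have h1 : adjoint Δ' ∘L Δ' = adjoint Δ' ∘L ((adjoint ι ∘L ι) ∘L Δ') := by
      rw [hιι, one_def, id_comp]
    have h2 : adjoint Δ' ∘L ((adjoint ι ∘L ι) ∘L Δ')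
        = adjoint (ι ∘L Δ') ∘L (ι ∘L Δ') := by
      rw [adjoint_comp, comp_assoc, comp_assoc]
    rw [h1, h2, hW10, hΔadj, hΔΔ]
  -- column reconstructions for W
  have hWe : W ∘L e = e ∘L T + u 0 ∘L Δ' := by
    have h0 : W ∘L e - (e ∘L T + u 0 ∘L Δ') = 0 := by
      refine colzero e u htotal _ ?_ ?_
      · rw [comp_sub, comp_add, hW00, ← comp_assoc (adjoint e) e T,
          ← comp_assoc (adjoint e) (u 0) Δ', he, heu 0, one_def, id_comp,
          zero_comp, add_zero, sub_self]
      · intro n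
        rw [comp_sub, comp_add, ← comp_assoc (adjoint (u n)) e T,
          ← comp_assoc (adjoint (u n)) (u 0) Δ', hue n, zero_comp, zero_add]
        rcases Nat.eq_zero_or_pos n with hn | hn
        · subst hn
          rw [hu 0, one_def, id_comp, hΔ'def, sub_self]
        · rw [huu n 0 (Nat.pos_iff_ne_zero.mp hn), hWn0 n (Nat.pos_iff_ne_zero.mp hn),
            zero_comp, sub_self]
    exact sub_eq_zero.mp h0
  have hWu : ∀ k, W ∘L u k = u (k + 1) := by
    intro k
    have h0 : W ∘L u k - u (k + 1) = 0 := by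
      refine colzero e u htotal _ ?_ ?_
      · rw [comp_sub, hW0n k, heu (k + 1), sub_zero]
      · intro n
        rw [comp_sub]
        rcases eq_or_ne n (k + 1) with hn | hn
        · subst hn
          rw [hWsub k, hu (k + 1), sub_self]
        · rw [hWmn n k hn, huu n (k + 1) hn, sub_zero]
    exact sub_eq_zero.mp h0
  -- column reconstructions for η
  have hηe : ∀ b, η b ∘L e = e ∘L π b := by
    intro b
    have h0 : η b ∘L e - e ∘L π b = 0 := by
      refine colzero e u htotal _ ?_ ?_
      · rw [comp_sub, hη00 b, ← comp_assoc, he, one_def, id_comp, sub_self]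
      · intro n
        rw [comp_sub, hηue b n, ← comp_assoc, hue n, zero_comp, sub_self]
    exact sub_eq_zero.mp h0
  set ρ : A → ℕ → (↥D →L[ℂ] ↥D) := fun b n => adjoint (u n) ∘L η b ∘L u n with hρdef
  have hρapp : ∀ b n, ρ b n = adjoint (u n) ∘L η b ∘L u n := fun _ _ => rfl
  clear_value ρ
  have hηu : ∀ b n, η b ∘L u n = u n ∘L ρ b n := by
    intro b n
    have h0 : η b ∘L u n - u n ∘L ρ b n = 0 := by
      refine colzero e u htotal _ ?_ ?_
      · rw [comp_sub, hηeu b n, ← comp_assoc, heu n, zero_comp, sub_self]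
      · intro m
        rw [comp_sub, ← comp_assoc (adjoint (u m)) (u n) (ρ b n)]
        rcases eq_or_ne m n with hm | hm
        · subst hm
          rw [hu m, one_def, id_comp, hρapp b m, sub_self]
        · rw [hηuu b m n hm, huu m n hm, zero_comp, sub_self]
    exact sub_eq_zero.mp h0
  -- rows of `adjoint W`
  have hWadj_e : ∀ {V : Type _} [NormedAddCommGroup V] [NormedSpace ℂ V] (Z : V →L[ℂ] K),
      adjoint e ∘L (adjoint W ∘L Z)
        = adjoint T ∘L (adjoint e ∘L Z) + adjoint Δ' ∘L (adjoint (u 0) ∘L Z) := by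
    intro V _ _ Z
    have h1 : adjoint e ∘L adjoint W = adjoint T ∘L adjoint e + adjoint Δ' ∘L adjoint (u 0) := by
      rw [← adjoint_comp, hWe, map_add, adjoint_comp, adjoint_comp]
    rw [← comp_assoc, h1, add_comp, comp_assoc, comp_assoc]
  have hWadj_u : ∀ (k : ℕ) {V : Type _} [NormedAddCommGroup V] [NormedSpace ℂ V]
      (Z : V →L[ℂ] K), adjoint (u k) ∘L (adjoint W ∘L Z) = adjoint (u (k + 1)) ∘L Z := by
    intro k V _ _ Z
    rw [← comp_assoc, ← adjoint_comp, hWu k]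
  constructor
  · -- `W` is an isometry
    have h0 : adjoint W ∘L W - 1 = 0 := by
      refine vanish e u htotal _ ?_ ?_
      · -- column over `e`
        refine colzero e u htotal _ ?_ ?_
        · rw [sub_comp, comp_assoc, one_def, id_comp, comp_sub, hWadj_e (W ∘L e)]
          have c1 : adjoint e ∘L (W ∘L e) = T := hW00
          have c2 : adjoint (u 0) ∘L (W ∘L e) = Δ' := hΔ'def.symm
          rw [c1, c2, hΔ'Δ', he, ← ContinuousLinearMap.star_eq_adjoint,
            ← ContinuousLinearMap.mul_def]
          abel
        · intro m
          rw [sub_comp, comp_assoc, one_def, id_comp, comp_sub, hWadj_u m (W ∘L e),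
            hue m, hWe, comp_add, ← comp_assoc (adjoint (u (m + 1))) e T,
            ← comp_assoc (adjoint (u (m + 1))) (u 0) Δ', hue (m + 1),
            huu (m + 1) 0 (Nat.succ_ne_zero m), zero_comp, zero_comp, add_zero, sub_zero]
      · -- columns over `u n`
        intro n
        refine colzero e u htotal _ ?_ ?_
        · rw [sub_comp, comp_assoc, one_def, id_comp, comp_sub, hWadj_e (W ∘L u n)]
          have c1 : adjoint e ∘L (W ∘L u n) = 0 := hW0n n
          have c2 : adjoint (u 0) ∘L (W ∘L u n) = 0 := by
            rw [hWu n]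
            exact huu 0 (n + 1) (Nat.succ_ne_zero n).symm
          rw [c1, c2, heu n, comp_zero, comp_zero, add_zero, sub_zero]
        · intro m
          rw [sub_comp, comp_assoc, one_def, id_comp, comp_sub, hWadj_u m (W ∘L u n),
            hWu n]
          rcases eq_or_ne m n with hm | hm
          · subst hm
            rw [hu (m + 1), hu m, sub_self]
          · rw [huu (m + 1) (n + 1) (by omega), huu m n hm, sub_self]
    exact sub_eq_zero.mp h0
  · -- intertwining
    intro a
    -- the commutation `Δ π(α a) = π(α a) Δ`
    have hBT : π (α a) ∘L adjoint T = adjoint T ∘L π a := by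
      have h := congrArg adjoint (hcov (star a))
      rw [adjoint_comp, adjoint_comp] at h
      have hπ1 : adjoint (π (α (star a))) = π (α a) := by
        rw [← ContinuousLinearMap.star_eq_adjoint, ← map_star, ← map_star, star_star]
      have hπ2 : adjoint (π (star a)) = π a := by
        rw [← ContinuousLinearMap.star_eq_adjoint, ← map_star, star_star]
      rwa [hπ1, hπ2] at h
    have hBP : Commute (π (α a)) (1 - star T * T) := by
      have hBTT : Commute (π (α a)) (star T * T) := by
        show π (α a) * (star T * T) = star T * T * π (α a)
        rw [ContinuousLinearMap.star_eq_adjoint]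
        calc (π (α a)) * (adjoint T * T) = (π (α a) ∘L adjoint T) ∘L T := rfl
        _ = (adjoint T ∘L π a) ∘L T := by rw [hBT]
        _ = adjoint T ∘L (π a ∘L T) := by rw [comp_assoc]
        _ = adjoint T ∘L (T ∘L π (α a)) := by rw [hcov a]
        _ = adjoint T * T * π (α a) := rfl
      exact (Commute.one_right (π (α a))).sub_right hBTT
    have hcommΔ : π (α a) ∘L Δ = Δ ∘L π (α a) := by
      have h := commute_sqrt hP hBP
      rw [← hΔ] at h
      rw [← ContinuousLinearMap.mul_def, ← ContinuousLinearMap.mul_def]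
      exact h.eq
    -- the key entry identities
    have key0 : Δ' ∘L π (α a) = ρ a 0 ∘L Δ' := by
      apply hcancel
      rw [← comp_assoc, ← comp_assoc, hW10, hρapp a 0, hηdiag a 0, comp_assoc, hW10]
      have hit : (⇑α)^[0 + 1] a = α a := by simp
      rw [hit]
      exact hcommΔ.symm
    have keyn : ∀ n, ρ (α a) n = ρ a (n + 1) := by
      intro n
      apply hcancel
      rw [hρapp, hρapp, hηdiag (α a) n, hηdiag a (n + 1)]
      have hit : (⇑α)^[n + 1] (α a) = (⇑α)^[n + 1 + 1] a :=
        (Function.iterate_succ_apply (⇑α) (n + 1) a).symm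
      rw [hit]
    -- conclude
    have h0 : W ∘L η (α a) - η a ∘L W = 0 := by
      refine vanish e u htotal _ ?_ ?_
      · rw [sub_comp, comp_assoc, comp_assoc, hηe (α a), hWe,
          ← comp_assoc W e (π (α a)), hWe, add_comp, comp_assoc e T (π (α a)),
          comp_assoc (u 0) Δ' (π (α a)), comp_add, ← comp_assoc (η a) e T,
          ← comp_assoc (η a) (u 0) Δ', hηe a, hηu a 0, comp_assoc e (π a) T,
          comp_assoc (u 0) (ρ a 0) Δ', hcov a, key0]
        abel
      · intro n
        rw [sub_comp, comp_assoc, comp_assoc, hηu (α a) n, hWu n,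
          ← comp_assoc W (u n) (ρ (α a) n), hWu n, hηu a (n + 1), keyn n, sub_self]
    exact sub_eq_zero.mp h0
end

section
/- With K, η, W as in the Schaeffer-matrix construction: for all n ≥ 0, T^n = P W^n |_H, where P is the orthogonal projection of K onto H. Moreover η(a)H ⊆ H and η(a)|H = π(a). -/
set_option synthInstance.maxHeartbeats 1000000
set_option maxHeartbeats 1000000

open ContinuousLinearMap

/-- If a continuous linear map into `K` is annihilated by `adjoint e` and all `adjoint (u n)`,
and the ranges of `e` and the `u n` are total in `K`, then it is zero. -/
lemma schaeffer_total_zero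
    {H : Type*} [NormedAddCommGroup H] [InnerProductSpace ℂ H] [CompleteSpace H]
    {K : Type*} [NormedAddCommGroup K] [InnerProductSpace ℂ K] [CompleteSpace K]
    {D : Submodule ℂ H} [CompleteSpace D]
    (e : H →L[ℂ] K) (u : ℕ → (D →L[ℂ] K))
    (htotal : (LinearMap.range (e : H →ₗ[ℂ] K) ⊔ ⨆ n, LinearMap.range (u n : D →ₗ[ℂ] K)).topologicalClosure = ⊤)
    {V : Type*} [NormedAddCommGroup V] [InnerProductSpace ℂ V] [CompleteSpace V]
    (X : V →L[ℂ] K) (hXe : adjoint e ∘L X = 0) (hXu : ∀ n, adjoint (u n) ∘L X = 0) :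
    X = 0 := by
  rw [Submodule.topologicalClosure_eq_top_iff] at htotal
  ext v
  have key : ∀ s ∈ (LinearMap.range (e : H →ₗ[ℂ] K) ⊔ ⨆ n, LinearMap.range (u n : D →ₗ[ℂ] K)),
      (inner ℂ s (X v) : ℂ) = 0 := by
    intro s hs
    obtain ⟨a, ha, b, hb, rfl⟩ := Submodule.mem_sup.mp hs
    obtain ⟨h, rfl⟩ := ha
    have ha0 : (inner ℂ (e h) (X v) : ℂ) = 0 := by
      rw [← ContinuousLinearMap.adjoint_inner_right]
      have : adjoint e (X v) = (adjoint e ∘L X) v := rfl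
      rw [this, hXe]
      simp
    have hb0 : (inner ℂ b (X v) : ℂ) = 0 := by
      refine Submodule.iSup_induction _ (motive := fun b => (inner ℂ b (X v) : ℂ) = 0) hb ?_ (by simp) ?_
      · rintro n _ ⟨d, rfl⟩
        change (inner ℂ (u n d) (X v) : ℂ) = 0
        rw [← ContinuousLinearMap.adjoint_inner_right]
        have : adjoint (u n) (X v) = (adjoint (u n) ∘L X) v := rfl
        rw [this, hXu n]
        simp
      · intro x y hx hy
        rw [inner_add_left, hx, hy, add_zero]
    rw [inner_add_left, hb0, add_zero]
    exact ha0
  have : X v ∈ (LinearMap.range (e : H →ₗ[ℂ] K) ⊔ ⨆ n, LinearMap.range (u n : D →ₗ[ℂ] K))ᗮ :=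
    (Submodule.mem_orthogonal _ _).mpr key
  rw [htotal] at this
  simpa using this

/-- With `K = H ⊕ D ⊕ D ⊕ ⋯`, `η` and `W` as in the Schaeffer-matrix
construction (described internally by an isometry `e : H → K` and isometries
`u n : D → K` with mutually orthogonal ranges spanning `K`):  for all `n ≥ 0`,
`T^n = P W^n |_H` where `P` is the orthogonal projection of `K` onto `H`
(equivalently `T^n = e* W^n e`); moreover `η(a)` leaves `H` invariant with
`η(a)|_H = π(a)`, i.e. `η(a) e = e π(a)`. -/
theorem schaeffer_dilation_compression
    {A : Type*} [CStarAlgebra A]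
    {H : Type*} [NormedAddCommGroup H] [InnerProductSpace ℂ H] [CompleteSpace H]
    {K : Type*} [NormedAddCommGroup K] [InnerProductSpace ℂ K] [CompleteSpace K]
    (α : A →⋆ₐ[ℂ] A) (hα : Function.Injective α) (hαone : α 1 = 1)
    (π : A →⋆ₐ[ℂ] (H →L[ℂ] H))
    (T : H →L[ℂ] H) (hT : ‖T‖ ≤ 1)
    (hcov : ∀ a : A, T ∘L π (α a) = π a ∘L T)
    -- the defect operator `Δ` and defect space `D`:
    (Δ : H →L[ℂ] H) (hΔ : Δ = CFC.sqrt (1 - star T * T))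
    (D : Submodule ℂ H) (hD : D = (LinearMap.range (Δ : H →ₗ[ℂ] H)).topologicalClosure) [CompleteSpace D]
    -- `K = H ⊕ D ⊕ D ⊕ ⋯`, internally:
    (e : H →L[ℂ] K) (u : ℕ → (D →L[ℂ] K))
    (he : adjoint e ∘L e = 1) (hu : ∀ n, adjoint (u n) ∘L u n = 1)
    (heu : ∀ n, adjoint e ∘L u n = 0)
    (huu : ∀ m n, m ≠ n → adjoint (u m) ∘L u n = 0)
    (htotal : (LinearMap.range (e : H →ₗ[ℂ] K) ⊔ ⨆ n, LinearMap.range (u n : D →ₗ[ℂ] K)).topologicalClosure = ⊤)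
    -- the matrix entries of `W`:
    (W : K →L[ℂ] K)
    (hW00 : adjoint e ∘L W ∘L e = T)
    (hW10 : D.subtypeL ∘L (adjoint (u 0) ∘L W ∘L e) = Δ)
    (hWsub : ∀ k, adjoint (u (k + 1)) ∘L W ∘L u k = 1)
    (hW0n : ∀ n, adjoint e ∘L W ∘L u n = 0)
    (hWn0 : ∀ n, n ≠ 0 → adjoint (u n) ∘L W ∘L e = 0)
    (hWmn : ∀ m n, m ≠ n + 1 → adjoint (u m) ∘L W ∘L u n = 0)
    -- the matrix entries of `η`:
    (η : A → (K →L[ℂ] K))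
    (hη00 : ∀ a, adjoint e ∘L η a ∘L e = π a)
    (hηdiag : ∀ a n, D.subtypeL ∘L (adjoint (u n) ∘L η a ∘L u n) =
      π ((⇑α)^[n + 1] a) ∘L D.subtypeL)
    (hηeu : ∀ a n, adjoint e ∘L η a ∘L u n = 0)
    (hηue : ∀ a n, adjoint (u n) ∘L η a ∘L e = 0)
    (hηuu : ∀ a m n, m ≠ n → adjoint (u m) ∘L η a ∘L u n = 0)
    :
    (∀ a : A, η a ∘L e = e ∘L π a) ∧ ∀ n : ℕ, T ^ n = adjoint e ∘L (W ^ n) ∘L e := by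
  have hue : ∀ n, adjoint (u n) ∘L e = 0 := by
    intro n
    have := congrArg adjoint (heu n)
    rw [adjoint_comp, adjoint_adjoint] at this
    simpa using this
  constructor
  · intro a
    have hz : η a ∘L e - e ∘L π a = 0 := by
      refine schaeffer_total_zero e u htotal _ ?_ ?_
      · rw [comp_sub, hη00 a, ← comp_assoc, he, one_def, id_comp, sub_self]
      · intro n
        rw [comp_sub, hηue a n, ← comp_assoc, hue n, zero_comp, sub_self]
    exact sub_eq_zero.mp hz
  · -- key fact: `adjoint W ∘L e = e ∘L adjoint T`
    have hWe : adjoint W ∘L e = e ∘L adjoint T := by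
      have hz : adjoint W ∘L e - e ∘L adjoint T = 0 := by
        refine schaeffer_total_zero e u htotal _ ?_ ?_
        · have h1 : adjoint e ∘L (adjoint W ∘L e) = adjoint T := by
            have := congrArg adjoint hW00
            rw [adjoint_comp, adjoint_comp, adjoint_adjoint, comp_assoc] at this
            exact this
          rw [comp_sub, h1, ← comp_assoc, he, one_def, id_comp, sub_self]
        · intro n
          have h1 : adjoint (u n) ∘L (adjoint W ∘L e) = 0 := by
            have := congrArg adjoint (hW0n n)
            rw [adjoint_comp, adjoint_comp, adjoint_adjoint, comp_assoc] at this
            simpa using this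
          rw [comp_sub, h1, ← comp_assoc, hue n, zero_comp, sub_self]
      exact sub_eq_zero.mp hz
    have heW : adjoint e ∘L W = T ∘L adjoint e := by
      have := congrArg adjoint hWe
      rwa [adjoint_comp, adjoint_comp, adjoint_adjoint, adjoint_adjoint] at this
    intro n
    induction n with
    | zero => simp [he, one_def]
    | succ n ih =>
      have hWn : W ^ (n + 1) = W ∘L W ^ n := pow_succ' W n
      have hTn : T ^ (n + 1) = T ∘L T ^ n := pow_succ' T n
      rw [hWn, hTn, ih]
      calc T ∘L (adjoint e ∘L ((W ^ n) ∘L e))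
          = (T ∘L adjoint e) ∘L ((W ^ n) ∘L e) := (comp_assoc _ _ _).symm
        _ = (adjoint e ∘L W) ∘L ((W ^ n) ∘L e) := by rw [heW]
        _ = adjoint e ∘L (W ∘L W ^ n) ∘L e := by rw [comp_assoc, comp_assoc]
end

section
/- Let (ρ, V) be the coisometric covariant extension of (π, T) constructed, on H ⊕ D* ⊕ D₁* ⊕ D₂* ⊕ ⋯, as the block matrix V with first row (T, D*, 0, 0, ...) and entries D_{k*} = W_k* on the superdiagonal thereafter, with ρ the diagonal of π, π̂, π̂₁, π̂₂, …. Then V is a coisometry: VV* = I. -/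
set_option synthInstance.maxHeartbeats 1000000
set_option maxHeartbeats 1000000

open ContinuousLinearMap

/-- Let `(ρ, V)` be the coisometric covariant extension of `(π, T)`
constructed on `H ⊕ 𝒟* ⊕ 𝒟₁* ⊕ 𝒟₂* ⊕ ⋯` (described internally by an isometry `e : H → KK`
and isometries `u k : 𝒟ₖ* → KK` with mutually orthogonal ranges spanning `KK`), where `V`
is the block matrix with first row `(T, D*, 0, 0, …)` and entries `D_{k*} = W_k*|𝒟ₖ*` on the
superdiagonal thereafter.  Here `Δ* = (I - T T*)^{1/2}`, `W : H → K₀` is an isometry from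
the extension lemma, `𝒟₀* = closure (ρ₀(A) W Δ* H)`, and for `k ≥ 1`, `W_k : 𝒟_{k-1}* → K_k`
are isometries with `𝒟ₖ* = closure (π_k(A) W_k 𝒟_{k-1}*)`.  Then `V` is a coisometry:
`V V* = I`. -/
theorem block_extension_coisometry
    {A : Type*} [CStarAlgebra A]
    {H : Type*} [NormedAddCommGroup H] [InnerProductSpace ℂ H] [CompleteSpace H]
    -- the ambient Hilbert spaces `K₀, K₁, K₂, …` of the inductive construction:
    {Kamb : ℕ → Type*} [∀ k, NormedAddCommGroup (Kamb k)]
    [∀ k, InnerProductSpace ℂ (Kamb k)] [∀ k, CompleteSpace (Kamb k)]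
    {KK : Type*} [NormedAddCommGroup KK] [InnerProductSpace ℂ KK] [CompleteSpace KK]
    (α : A →⋆ₐ[ℂ] A) (hα : Function.Injective α) (hαone : α 1 = 1)
    (π : A →⋆ₐ[ℂ] (H →L[ℂ] H))
    (T : H →L[ℂ] H) (hT : ‖T‖ ≤ 1)
    (hcov : ∀ a : A, T ∘L π (α a) = π a ∘L T)
    (Δstar : H →L[ℂ] H) (hΔ : Δstar = CFC.sqrt (1 - T * star T))
    -- the representations `ρ₀ = π₀, π₁, π₂, …` on the ambient spaces:
    (ρreps : ∀ k, A →⋆ₐ[ℂ] (Kamb k →L[ℂ] Kamb k))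
    -- the isometry `W : H → K₀` from the extension lemma:
    (W0 : H →L[ℂ] Kamb 0) (hW0 : adjoint W0 ∘L W0 = 1)
    (hext : ∀ a : A, adjoint W0 ∘L (ρreps 0) (α a) ∘L W0 = π a)
    -- the defect spaces `𝒟₀*, 𝒟₁*, …`:
    (Dsub : ∀ k, Submodule ℂ (Kamb k)) [∀ k, CompleteSpace (Dsub k)]
    (hD0 : Dsub 0 = (Submodule.span ℂ
      {x : Kamb 0 | ∃ (a : A) (h : H), x = ρreps 0 a (W0 (Δstar h))}).topologicalClosure)
    -- the isometries `W_{k+1} : 𝒟ₖ* → K_{k+1}`: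
    (Wk : ∀ k, (Dsub k →L[ℂ] Kamb (k + 1)))
    (hWk : ∀ k, adjoint (Wk k) ∘L Wk k = 1)
    (hDk : ∀ k, Dsub (k + 1) = (Submodule.span ℂ
      {x : Kamb (k + 1) | ∃ (a : A) (y : Dsub k),
        x = ρreps (k + 1) a (Wk k y)}).topologicalClosure)
    -- `KK = H ⊕ 𝒟₀* ⊕ 𝒟₁* ⊕ ⋯`, internally:
    (e : H →L[ℂ] KK) (u : ∀ k, (Dsub k →L[ℂ] KK))
    (he : adjoint e ∘L e = 1) (hu : ∀ k, adjoint (u k) ∘L u k = 1)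
    (heu : ∀ k, adjoint e ∘L u k = 0)
    (huu : ∀ m n, m ≠ n → adjoint (u m) ∘L u n = 0)
    (htotal : (LinearMap.range (e : H →ₗ[ℂ] KK) ⊔ ⨆ k, LinearMap.range ((u k : Dsub k →ₗ[ℂ] KK))).topologicalClosure = ⊤)
    -- the matrix entries of `V`: first row `(T, D* = Δ* W* |𝒟₀*, 0, 0, …)`,
    -- then the superdiagonal `D_{k+1 *} = W_{k+1}* |𝒟_{k+1}*`:
    (V : KK →L[ℂ] KK)
    (hV00 : adjoint e ∘L V ∘L e = T)
    (hV01 : adjoint e ∘L V ∘L u 0 = Δstar ∘L adjoint W0 ∘L (Dsub 0).subtypeL)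
    (hVsup : ∀ k, adjoint (u k) ∘L V ∘L u (k + 1) = adjoint (Wk k) ∘L (Dsub (k + 1)).subtypeL)
    (hVe : ∀ k, adjoint (u k) ∘L V ∘L e = 0)
    (hV0k : ∀ k, k ≠ 0 → adjoint e ∘L V ∘L u k = 0)
    (hVmn : ∀ m n, n ≠ m + 1 → adjoint (u m) ∘L V ∘L u n = 0) :
    V ∘L adjoint V = 1 := by

  classical
  -- positivity of `1 - T T*`
  have hpos : (0:H→L[ℂ]H) ≤ 1 - T * star T := by
    have h1 : T * star T ≤ algebraMap ℝ (H →L[ℂ] H) (‖T‖^2) :=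
      CStarAlgebra.mul_star_le_algebraMap_norm_sq
    have key : (0:H→L[ℂ]H) ≤ algebraMap ℝ (H →L[ℂ] H) (1 - ‖T‖^2) := by
      have h := star_mul_self_nonneg (algebraMap ℝ (H→L[ℂ]H) (Real.sqrt (1 - ‖T‖^2)))
      rwa [← algebraMap_star_comm, ← map_mul, star_trivial,
        Real.mul_self_sqrt (by nlinarith [norm_nonneg T])] at h
    rw [map_sub, map_one] at key
    exact sub_nonneg.mpr (h1.trans (sub_nonneg.mp key))
  -- Δ* is selfadjoint and Δ*² = 1 - T T*
  have hΔsa : adjoint Δstar = Δstar := by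
    rw [← ContinuousLinearMap.star_eq_adjoint]
    have h0 : (0:H→L[ℂ]H) ≤ Δstar := hΔ ▸ CFC.sqrt_nonneg _
    exact IsSelfAdjoint.of_nonneg h0
  have hΔ2 : ∀ h : H, Δstar (Δstar h) = h - T (adjoint T h) := by
    intro h
    have h2 : CFC.sqrt (1 - T * star T) * CFC.sqrt (1 - T * star T) = 1 - T * star T :=
      CFC.sqrt_mul_sqrt_self _ hpos
    rw [← hΔ] at h2
    have := DFunLike.congr_fun h2 h
    simpa [ContinuousLinearMap.mul_apply, ContinuousLinearMap.sub_apply,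
      ContinuousLinearMap.star_eq_adjoint] using this
  -- membership of the defect vectors
  have hmem0 : ∀ h : H, W0 (Δstar h) ∈ Dsub 0 := by
    intro h
    rw [hD0]
    refine Submodule.le_topologicalClosure _ (Submodule.subset_span ?_)
    exact ⟨1, h, by simp⟩
  have hmemk : ∀ k (d : Dsub k), Wk k d ∈ Dsub (k+1) := by
    intro k d
    rw [hDk k]
    refine Submodule.le_topologicalClosure _ (Submodule.subset_span ?_)
    exact ⟨1, d, by simp⟩
  -- extensionality from totality
  have hzero : ∀ z : KK, adjoint e z = 0 → (∀ k, adjoint (u k) z = 0) → z = 0 := by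
    intro z hze hzu
    have hS : z ∈ (LinearMap.range (e : H →ₗ[ℂ] KK) ⊔ ⨆ k, LinearMap.range ((u k : Dsub k →ₗ[ℂ] KK)))ᗮ := by
      rw [Submodule.mem_orthogonal]
      intro x hx
      obtain ⟨y, hy, w, hw, rfl⟩ := Submodule.mem_sup.mp hx
      rw [inner_add_left]
      obtain ⟨h, rfl⟩ := hy
      have h1 : (inner ℂ (e h) z : ℂ) = 0 := by
        rw [← ContinuousLinearMap.adjoint_inner_right, hze, inner_zero_right]
      have h2 : (inner ℂ w z : ℂ) = 0 := by
        refine Submodule.iSup_induction _ (motive := fun w => (inner ℂ w z : ℂ) = 0) hw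
          (fun k x hx => ?_) (by simp) (fun a b ha hb => by
            show (inner ℂ (a + b) z : ℂ) = 0
            rw [inner_add_left]
            rw [show (inner ℂ a z : ℂ) = 0 from ha, show (inner ℂ b z : ℂ) = 0 from hb, add_zero])
        obtain ⟨d, rfl⟩ := hx
        show (inner ℂ (u k d) z : ℂ) = 0
        rw [← ContinuousLinearMap.adjoint_inner_right, hzu, inner_zero_right]
      show (inner ℂ (e h) z : ℂ) + inner ℂ w z = 0
      rw [h1, h2, add_zero]
    have hbot : (LinearMap.range (e : H →ₗ[ℂ] KK) ⊔ ⨆ k, LinearMap.range ((u k : Dsub k →ₗ[ℂ] KK)))ᗮ = ⊥ :=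
      Submodule.topologicalClosure_eq_top_iff.mp htotal
    simpa [hbot] using hS
  -- transposed matrix entries of `V*`
  have hA00 : ∀ h : H, adjoint e (adjoint V (e h)) = adjoint T h := by
    intro h
    have h' := congrArg adjoint hV00
    simp only [ContinuousLinearMap.adjoint_comp, adjoint_adjoint] at h'
    simpa using DFunLike.congr_fun h' h
  have hA0u : ∀ (h : H), adjoint (u 0) (adjoint V (e h)) = (⟨W0 (Δstar h), hmem0 h⟩ : Dsub 0) := by
    intro h
    have h' := congrArg adjoint hV01
    simp only [ContinuousLinearMap.adjoint_comp, adjoint_adjoint,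
      Submodule.adjoint_subtypeL, hΔsa] at h'
    have h'' := DFunLike.congr_fun h' h
    simp only [ContinuousLinearMap.comp_apply] at h''
    rw [h'']
    exact Subtype.ext (Submodule.starProjection_eq_self_iff.mpr (hmem0 h))
  have hAku : ∀ k, k ≠ 0 → ∀ (h : H), adjoint (u k) (adjoint V (e h)) = 0 := by
    intro k hk h
    have h' := congrArg adjoint (hV0k k hk)
    simp only [ContinuousLinearMap.adjoint_comp, adjoint_adjoint, map_zero] at h'
    simpa using DFunLike.congr_fun h' h
  have hAeu : ∀ k (d : Dsub k), adjoint e (adjoint V (u k d)) = 0 := by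
    intro k d
    have h' := congrArg adjoint (hVe k)
    simp only [ContinuousLinearMap.adjoint_comp, adjoint_adjoint, map_zero] at h'
    simpa using DFunLike.congr_fun h' d
  have hAsup : ∀ k (d : Dsub k),
      adjoint (u (k+1)) (adjoint V (u k d)) = (⟨Wk k d, hmemk k d⟩ : Dsub (k+1)) := by
    intro k d
    have h' := congrArg adjoint (hVsup k)
    simp only [ContinuousLinearMap.adjoint_comp, adjoint_adjoint,
      Submodule.adjoint_subtypeL] at h'
    have h'' := DFunLike.congr_fun h' d
    simp only [ContinuousLinearMap.comp_apply] at h''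
    rw [h'']
    exact Subtype.ext (Submodule.starProjection_eq_self_iff.mpr (hmemk k d))
  have hAmn : ∀ m k, m ≠ k + 1 → ∀ (d : Dsub k), adjoint (u m) (adjoint V (u k d)) = 0 := by
    intro m k hm d
    have h' := congrArg adjoint (hVmn k m hm)
    simp only [ContinuousLinearMap.adjoint_comp, adjoint_adjoint, map_zero] at h'
    simpa using DFunLike.congr_fun h' d
  -- applied versions of the orthogonality relations
  have heA : ∀ h : H, adjoint e (e h) = h := fun h => by
    simpa using DFunLike.congr_fun he h
  have huA : ∀ k (d : Dsub k), adjoint (u k) (u k d) = d := fun k d => by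
    simpa using DFunLike.congr_fun (hu k) d
  have heuA : ∀ k (d : Dsub k), adjoint e (u k d) = 0 := fun k d => by
    simpa using DFunLike.congr_fun (heu k) d
  have hueA : ∀ k (h : H), adjoint (u k) (e h) = 0 := fun k h => by
    have h' := congrArg adjoint (heu k)
    simp only [ContinuousLinearMap.adjoint_comp, adjoint_adjoint, map_zero] at h'
    simpa using DFunLike.congr_fun h' h
  have huuA : ∀ m n, m ≠ n → ∀ (d : Dsub n), adjoint (u m) (u n d) = 0 := fun m n hmn d => by
    simpa using DFunLike.congr_fun (huu m n hmn) d
  -- explicit formula for V* on the spanning vectors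
  have hVadj_e : ∀ h : H,
      adjoint V (e h) = e (adjoint T h) + u 0 (⟨W0 (Δstar h), hmem0 h⟩ : Dsub 0) := by
    intro h
    have hz := hzero (adjoint V (e h) - (e (adjoint T h) + u 0 ⟨W0 (Δstar h), hmem0 h⟩)) ?_ ?_
    · exact sub_eq_zero.mp hz
    · rw [map_sub, map_add, hA00, heA, heuA, add_zero, sub_self]
    · intro k
      rw [map_sub, map_add, hueA]
      rcases k with _ | k
      · rw [hA0u, huA, zero_add, sub_self]
      · rw [hAku _ (Nat.succ_ne_zero k), huuA _ _ (Nat.succ_ne_zero k), add_zero, sub_self]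
  have hVadj_u : ∀ k (d : Dsub k),
      adjoint V (u k d) = u (k+1) (⟨Wk k d, hmemk k d⟩ : Dsub (k+1)) := by
    intro k d
    have hz := hzero (adjoint V (u k d) - u (k+1) ⟨Wk k d, hmemk k d⟩) ?_ ?_
    · exact sub_eq_zero.mp hz
    · rw [map_sub, hAeu, heuA, sub_self]
    · intro m
      rw [map_sub]
      by_cases hm : m = k + 1
      · subst hm
        rw [hAsup, huA, sub_self]
      · rw [hAmn m k hm, huuA m (k+1) hm, sub_self]
  -- applied versions of the matrix entries of V
  have hV00A : ∀ h : H, adjoint e (V (e h)) = T h := fun h => by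
    simpa using DFunLike.congr_fun hV00 h
  have hV01A : ∀ d : Dsub 0, adjoint e (V (u 0 d)) = Δstar (adjoint W0 (d : Kamb 0)) := fun d => by
    simpa using DFunLike.congr_fun hV01 d
  have hVsupA : ∀ k (d : Dsub (k+1)),
      adjoint (u k) (V (u (k+1) d)) = adjoint (Wk k) (d : Kamb (k+1)) := fun k d => by
    simpa using DFunLike.congr_fun (hVsup k) d
  have hVeA : ∀ k (h : H), adjoint (u k) (V (e h)) = 0 := fun k h => by
    simpa using DFunLike.congr_fun (hVe k) h
  have hV0kA : ∀ k, k ≠ 0 → ∀ (d : Dsub k), adjoint e (V (u k d)) = 0 := fun k hk d => by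
    simpa using DFunLike.congr_fun (hV0k k hk) d
  have hVmnA : ∀ m n, n ≠ m + 1 → ∀ (d : Dsub n), adjoint (u m) (V (u n d)) = 0 :=
    fun m n hn d => by simpa using DFunLike.congr_fun (hVmn m n hn) d
  have hW0A : ∀ h : H, adjoint W0 (W0 h) = h := fun h => by
    simpa using DFunLike.congr_fun hW0 h
  have hWkA : ∀ k (d : Dsub k), adjoint (Wk k) (Wk k d) = d := fun k d => by
    simpa using DFunLike.congr_fun (hWk k) d
  -- V V* fixes the spanning vectors
  have hfix_e : ∀ h : H, V (adjoint V (e h)) = e h := by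
    intro h
    have hz := hzero (V (adjoint V (e h)) - e h) ?_ ?_
    · exact sub_eq_zero.mp hz
    · rw [map_sub, hVadj_e, map_add, map_add, hV00A, hV01A, hW0A, hΔ2, heA]
      abel
    · intro k
      rw [map_sub, hVadj_e, map_add, map_add, hVeA, hueA,
        hVmnA k 0 (Nat.zero_ne_add_one k) _]
      simp
  have hfix_u : ∀ k (d : Dsub k), V (adjoint V (u k d)) = u k d := by
    intro k d
    have hz := hzero (V (adjoint V (u k d)) - u k d) ?_ ?_
    · exact sub_eq_zero.mp hz
    · rw [map_sub, hVadj_u, hV0kA (k+1) (Nat.succ_ne_zero k), heuA, sub_self]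
    · intro m
      rw [map_sub, hVadj_u]
      by_cases hm : m = k
      · subst hm
        rw [hVsupA, hWkA, huA, sub_self]
      · rw [hVmnA m (k+1) (by omega), huuA m k hm, sub_self]
  -- conclude by density
  have hker : LinearMap.range (e : H →ₗ[ℂ] KK) ⊔ ⨆ k, LinearMap.range ((u k : Dsub k →ₗ[ℂ] KK))
      ≤ LinearMap.ker ((V ∘L adjoint V - 1 : KK →L[ℂ] KK) : KK →ₗ[ℂ] KK) := by
    refine sup_le ?_ (iSup_le fun k => ?_)
    · rintro x ⟨h, rfl⟩
      simp only [LinearMap.mem_ker, ContinuousLinearMap.coe_sub', Pi.sub_apply,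
        ContinuousLinearMap.coe_comp', Function.comp_apply, ContinuousLinearMap.one_apply,
        ContinuousLinearMap.coe_coe]
      rw [hfix_e, sub_self]
    · rintro x ⟨d, rfl⟩
      simp only [LinearMap.mem_ker, ContinuousLinearMap.coe_sub', Pi.sub_apply,
        ContinuousLinearMap.coe_comp', Function.comp_apply, ContinuousLinearMap.one_apply,
        ContinuousLinearMap.coe_coe]
      rw [hfix_u, sub_self]
  have htop : (⊤ : Submodule ℂ KK) ≤ LinearMap.ker ((V ∘L adjoint V - 1 : KK →L[ℂ] KK) : KK →ₗ[ℂ] KK) := by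
    rw [← htotal]
    exact Submodule.topologicalClosure_minimal _ hker
      (ContinuousLinearMap.isClosed_ker (V ∘L adjoint V - 1))
  ext x
  have hx := htop (Submodule.mem_top (x := x))
  simp only [LinearMap.mem_ker, ContinuousLinearMap.coe_sub', Pi.sub_apply,
    ContinuousLinearMap.coe_comp', Function.comp_apply, ContinuousLinearMap.one_apply,
    ContinuousLinearMap.coe_coe] at hx
  simpa [sub_eq_zero] using hx
end

section
/- Let (π, T) be a contractive covariant representation of (A, α) and let (η, W) on K be its minimal isometric dilation (as constructed via the Schaeffer matrix). If (η', W') on K' is another isometric covariant representation extending (π, T) in the sense that η'(a)|H = π(a), W' is an isometry with P_H W'^n|_H = T^n for all n, η', W' covariant, and K' is the smallest W'-invariant subspace containing H, then there is a unitary Φ : K → K' with Φ|H = id_H, ΦW = W'Φ, and Φη(a) = η'(a)Φ for all a ∈ A. -/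
set_option synthInstance.maxHeartbeats 1000000
set_option maxHeartbeats 1000000

open ContinuousLinearMap

local notation "⟪" x ", " y "⟫" => @inner ℂ _ _ x y

/-- Inner products of vectors `W^m (e h)` in an isometric dilation are determined by `T`. -/
private lemma dil_pow_inner {H K : Type*}
    [NormedAddCommGroup H] [InnerProductSpace ℂ H] [CompleteSpace H]
    [NormedAddCommGroup K] [InnerProductSpace ℂ K] [CompleteSpace K]
    (T : H →L[ℂ] H) (e : H →L[ℂ] K) (W : K →L[ℂ] K)
    (hWiso : adjoint W ∘L W = 1)
    (hdil : ∀ n : ℕ, T ^ n = adjoint e ∘L (W ^ n) ∘L e) :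
    ∀ m n : ℕ, ∀ h g : H, ⟪(W ^ m) (e h), (W ^ n) (e g)⟫ =
      if m ≤ n then ⟪h, (T ^ (n - m)) g⟫ else ⟪(T ^ (m - n)) h, g⟫ := by
  have hW : ∀ x y : K, ⟪W x, W y⟫ = ⟪x, y⟫ := by
    intro x y
    have h1 : (adjoint W) (W x) = x := by
      rw [← ContinuousLinearMap.comp_apply, hWiso, ContinuousLinearMap.one_apply]
    calc ⟪W x, W y⟫ = ⟪(adjoint W) (W x), y⟫ := (adjoint_inner_left W y (W x)).symm
      _ = ⟪x, y⟫ := by rw [h1]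
  have hWpow : ∀ (m : ℕ) (x y : K), ⟪(W ^ m) x, (W ^ m) y⟫ = ⟪x, y⟫ := by
    intro m
    induction m with
    | zero => intro x y; simp
    | succ n ih =>
      intro x y
      rw [pow_succ, ContinuousLinearMap.mul_apply, ContinuousLinearMap.mul_apply, ih, hW]
  have base : ∀ (k : ℕ) (h g : H), ⟪e h, (W ^ k) (e g)⟫ = ⟪h, (T ^ k) g⟫ := by
    intro k h g
    have h1 : (T ^ k) g = (adjoint e) ((W ^ k) (e g)) := by
      rw [hdil k]; rfl
    rw [h1, adjoint_inner_right]
  have main : ∀ (m k : ℕ) (h g : H),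
      ⟪(W ^ m) (e h), (W ^ (m + k)) (e g)⟫ = ⟪h, (T ^ k) g⟫ := by
    intro m k h g
    have h1 : (W ^ (m + k)) (e g) = (W ^ m) ((W ^ k) (e g)) := by
      rw [pow_add, ContinuousLinearMap.mul_apply]
    rw [h1, hWpow, base]
  intro m n h g
  rcases le_or_gt m n with hmn | hmn
  · rw [if_pos hmn]
    obtain ⟨k, rfl⟩ : ∃ k, n = m + k := ⟨n - m, (Nat.add_sub_cancel' hmn).symm⟩
    rw [Nat.add_sub_cancel_left]
    exact main m k h g
  · rw [if_neg (not_le.mpr hmn)]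
    obtain ⟨k, rfl⟩ : ∃ k, m = n + k := ⟨m - n, (Nat.add_sub_cancel' hmn.le).symm⟩
    rw [Nat.add_sub_cancel_left]
    calc ⟪(W ^ (n + k)) (e h), (W ^ n) (e g)⟫
        = (starRingEnd ℂ) ⟪(W ^ n) (e g), (W ^ (n + k)) (e h)⟫ := (inner_conj_symm _ _).symm
      _ = (starRingEnd ℂ) ⟪g, (T ^ k) h⟫ := by rw [main n k g h]
      _ = ⟪(T ^ k) h, g⟫ := inner_conj_symm _ _

/-- Covariance propagates to powers of `W`. -/
private lemma cov_pow {A K : Type*} [CStarAlgebra A]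
    [NormedAddCommGroup K] [InnerProductSpace ℂ K] [CompleteSpace K]
    (α : A →⋆ₐ[ℂ] A) (η : A →⋆ₐ[ℂ] (K →L[ℂ] K)) (W : K →L[ℂ] K)
    (hWcov : ∀ a : A, W ∘L η (α a) = η a ∘L W) :
    ∀ (n : ℕ) (a : A) (x : K), η a ((W ^ n) x) = (W ^ n) (η ((⇑α)^[n] a) x) := by
  intro n
  induction n with
  | zero => intro a x; simp
  | succ n ih =>
    intro a x
    have h1 : (W ^ (n + 1)) x = W ((W ^ n) x) := by
      rw [pow_succ', ContinuousLinearMap.mul_apply]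
    have h2 : (W ^ (n + 1)) (η ((⇑α)^[n + 1] a) x) = W ((W ^ n) (η ((⇑α)^[n] (α a)) x)) := by
      rw [pow_succ', ContinuousLinearMap.mul_apply, Function.iterate_succ_apply]
    rw [h1, h2, ← ih (α a) x]
    have h3 := congrArg (fun (f : K →L[ℂ] K) => f ((W ^ n) x)) (hWcov a)
    simpa using h3.symm

/-- Let `(π, T)` be a contractive covariant representation of `(A, α)` on
`H` and let `(η, W)` on `K ⊇ H` be a minimal isometric dilation of `(π, T)` (as constructed
via the Schaeffer matrix): `H` is embedded in `K` by an isometry `e`, `η(a) e = e π(a)`, `W`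
is an isometry, `W η(α a) = η(a) W`, `T^n = P_H W^n|_H` for all `n`, and the vectors
`W^n e h` span a dense subspace of `K`.  If `(η', W')` on `K'` is another minimal isometric
covariant dilation of `(π, T)`, then there is a unitary `Φ : K → K'` with `Φ|_H = id_H`
(i.e. `Φ (e h) = e' h`), `Φ W = W' Φ`, and `Φ η(a) = η'(a) Φ` for all `a ∈ A`. -/
theorem minimal_isometric_dilation_unique
    {A : Type*} [CStarAlgebra A]
    {H : Type*} [NormedAddCommGroup H] [InnerProductSpace ℂ H] [CompleteSpace H]
    {K : Type*} [NormedAddCommGroup K] [InnerProductSpace ℂ K] [CompleteSpace K]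
    {K' : Type*} [NormedAddCommGroup K'] [InnerProductSpace ℂ K'] [CompleteSpace K']
    (α : A →⋆ₐ[ℂ] A) (hα : Function.Injective α) (hαone : α 1 = 1)
    (π : A →⋆ₐ[ℂ] (H →L[ℂ] H))
    (T : H →L[ℂ] H) (hT : ‖T‖ ≤ 1)
    (hcov : ∀ a : A, T ∘L π (α a) = π a ∘L T)
    -- the first minimal isometric dilation `(η, W)` on `K`:
    (e : H →L[ℂ] K) (he : adjoint e ∘L e = 1)
    (η : A →⋆ₐ[ℂ] (K →L[ℂ] K)) (W : K →L[ℂ] K)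
    (hrest : ∀ a : A, η a ∘L e = e ∘L π a)
    (hWiso : adjoint W ∘L W = 1)
    (hWcov : ∀ a : A, W ∘L η (α a) = η a ∘L W)
    (hdil : ∀ n : ℕ, T ^ n = adjoint e ∘L (W ^ n) ∘L e)
    (hmin : (Submodule.span ℂ {x : K | ∃ (n : ℕ) (h : H), x = (W ^ n) (e h)}).topologicalClosure = ⊤)
    -- a second minimal isometric dilation `(η', W')` on `K'`:
    (e' : H →L[ℂ] K') (he' : adjoint e' ∘L e' = 1)
    (η' : A →⋆ₐ[ℂ] (K' →L[ℂ] K')) (W' : K' →L[ℂ] K')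
    (hrest' : ∀ a : A, η' a ∘L e' = e' ∘L π a)
    (hWiso' : adjoint W' ∘L W' = 1)
    (hWcov' : ∀ a : A, W' ∘L η' (α a) = η' a ∘L W')
    (hdil' : ∀ n : ℕ, T ^ n = adjoint e' ∘L (W' ^ n) ∘L e')
    (hmin' : (Submodule.span ℂ
      {x : K' | ∃ (n : ℕ) (h : H), x = (W' ^ n) (e' h)}).topologicalClosure = ⊤) :
    ∃ Φ : K ≃ₗᵢ[ℂ] K',
      (∀ h : H, Φ (e h) = e' h) ∧
      (∀ x : K, Φ (W x) = W' (Φ x)) ∧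
      ∀ (a : A) (x : K), Φ (η a x) = η' a (Φ x) := by
  classical
  -- the generating set of pairs
  set gen : Set (K × K') :=
    {p | ∃ (n : ℕ) (h : H), p = ((W ^ n) (e h), (W' ^ n) (e' h))} with hgen
  set G : Submodule ℂ (K × K') := Submodule.span ℂ gen with hG
  have key := dil_pow_inner T e W hWiso hdil
  have key' := dil_pow_inner T e' W' hWiso' hdil'
  have inner_gen : ∀ p ∈ gen, ∀ q ∈ gen, ⟪p.1, q.1⟫ = ⟪p.2, q.2⟫ := by
    rintro _ ⟨m, h, rfl⟩ _ ⟨n, g, rfl⟩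
    simp only
    rw [key m n h g, key' m n h g]
  -- inner products are preserved on the span
  have innerG : ∀ p ∈ G, ∀ q ∈ G, ⟪p.1, q.1⟫ = ⟪p.2, q.2⟫ := by
    intro p hp q hq
    induction hp, hq using Submodule.span_induction₂ with
    | mem_mem x y hx hy => exact inner_gen x hx y hy
    | zero_left y hy => simp
    | zero_right x hx => simp
    | add_left x y z hx hy hz h1 h2 =>
      simp only [Prod.fst_add, Prod.snd_add, inner_add_left, h1, h2]
    | add_right x y z hx hy hz h1 h2 =>
      simp only [Prod.fst_add, Prod.snd_add, inner_add_right, h1, h2]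
    | smul_left c x y hx hy h1 =>
      simp only [Prod.smul_fst, Prod.smul_snd, inner_smul_left, h1]
    | smul_right c x y hx hy h1 =>
      simp only [Prod.smul_fst, Prod.smul_snd, inner_smul_right, h1]
  have normG : ∀ p ∈ G, ‖p.1‖ = ‖p.2‖ := by
    intro p hp
    have h1 := innerG p hp p hp
    rw [@norm_eq_sqrt_re_inner ℂ, @norm_eq_sqrt_re_inner ℂ, h1]
  -- the two coordinate projections of G
  set ι : G →ₗ[ℂ] K := (LinearMap.fst ℂ K K').comp G.subtype with hι
  set σ : G →ₗ[ℂ] K' := (LinearMap.snd ℂ K K').comp G.subtype with hσ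
  have hισ : ∀ p : G, ‖σ p‖ = ‖ι p‖ := fun p => (normG p p.2).symm
  have hιinj : Function.Injective ι := by
    intro p q hpq
    have hmem : (↑p - ↑q : K × K') ∈ G := sub_mem p.2 q.2
    have h1 : (↑p - ↑q : K × K').1 = 0 := by
      have : (p : K × K').1 = (q : K × K').1 := hpq
      simp [Prod.fst_sub, this]
    have h2 : ‖(↑p - ↑q : K × K').2‖ = 0 := by
      rw [← normG _ hmem, h1, norm_zero]
    have h3 : (↑p - ↑q : K × K').2 = 0 := norm_eq_zero.mp h2
    have : (↑p : K × K') = ↑q := by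
      have := sub_eq_zero.mp (Prod.ext h1 h3 : (↑p - ↑q : K × K') = (0, 0))
      exact this
    exact Subtype.ext this
  -- the range of ι, a dense subspace of K
  set V : Submodule ℂ K := LinearMap.range ι with hV
  set eqv : G ≃ₗ[ℂ] V := LinearEquiv.ofInjective ι hιinj with heqv
  set Φ₀ : V →ₗ[ℂ] K' := σ.comp (eqv.symm : V →ₗ[ℂ] G) with hΦ₀def
  have hΦ₀ : ∀ p : G, Φ₀ (eqv p) = σ p := by
    intro p
    simp only [hΦ₀def, LinearMap.comp_apply, LinearEquiv.coe_coe, LinearEquiv.symm_apply_apply]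
  have heqvcoe : ∀ p : G, ((eqv p : V) : K) = ι p := fun p => rfl
  have hΦ₀norm : ∀ v : V, ‖Φ₀ v‖ = ‖v‖ := by
    intro v
    obtain ⟨p, rfl⟩ : ∃ p : G, eqv p = v := eqv.surjective v
    rw [hΦ₀, hισ]
    have : ‖(eqv p : V)‖ = ‖((eqv p : V) : K)‖ := rfl
    rw [this, heqvcoe]
  set Φiso₀ : V →ₗᵢ[ℂ] K' := ⟨Φ₀, hΦ₀norm⟩ with hΦiso₀
  -- V is dense in K
  have hVle : Submodule.span ℂ {x : K | ∃ (n : ℕ) (h : H), x = (W ^ n) (e h)} ≤ V := by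
    apply Submodule.span_le.mpr
    rintro _ ⟨n, h, rfl⟩
    exact ⟨⟨((W ^ n) (e h), (W' ^ n) (e' h)), Submodule.subset_span ⟨n, h, rfl⟩⟩, rfl⟩
  have hVdense : Dense (V : Set K) := by
    rw [Submodule.dense_iff_topologicalClosure_eq_top]
    exact top_le_iff.mp (hmin ▸ Submodule.topologicalClosure_mono hVle)
  have hVrange : DenseRange (V.subtypeL) := by
    have : Set.range (V.subtypeL) = (V : Set K) := Subtype.range_val
    rw [DenseRange, this]
    exact hVdense
  have hVui : IsUniformInducing (V.subtypeL) :=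
    (isometry_subtype_coe : Isometry ((↑) : V → K)).isUniformInducing
  -- extend to all of K
  set ψ : K →L[ℂ] K' := Φiso₀.toContinuousLinearMap.extend V.subtypeL with hψdef
  have hψV : ∀ p : G, ψ (ι p) = σ p := by
    intro p
    have h1 : ψ (V.subtypeL (eqv p)) = Φiso₀.toContinuousLinearMap (eqv p) :=
      ContinuousLinearMap.extend_eq _ hVrange hVui _
    have h2 : V.subtypeL (eqv p) = ι p := heqvcoe p
    rw [h2] at h1
    rw [h1]
    exact hΦ₀ p
  have hψgen : ∀ (n : ℕ) (h : H), ψ ((W ^ n) (e h)) = (W' ^ n) (e' h) := by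
    intro n h
    exact hψV ⟨((W ^ n) (e h), (W' ^ n) (e' h)), Submodule.subset_span ⟨n, h, rfl⟩⟩
  -- ψ is an isometry
  have hψnorm : ∀ x : K, ‖ψ x‖ = ‖x‖ := by
    have heq : Set.EqOn (fun x : K => ‖ψ x‖) (fun x : K => ‖x‖) (V : Set K) := by
      rintro _ ⟨p, rfl⟩
      simp only
      rw [hψV p, hισ p]
    have := Continuous.ext_on hVdense (continuous_norm.comp ψ.continuous) continuous_norm heq
    exact fun x => congrFun this x
  set Φiso : K →ₗᵢ[ℂ] K' := ⟨(ψ : K →ₗ[ℂ] K'), hψnorm⟩ with hΦiso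
  have hΦisoψ : ∀ x : K, Φiso x = ψ x := fun _ => rfl
  -- surjectivity
  have hclosed : IsClosed (Set.range Φiso) :=
    Φiso.isometry.isClosedEmbedding.isClosed_range
  have hrange : LinearMap.range Φiso.toLinearMap = ⊤ := by
    have hle : Submodule.span ℂ {x : K' | ∃ (n : ℕ) (h : H), x = (W' ^ n) (e' h)} ≤
        LinearMap.range Φiso.toLinearMap := by
      apply Submodule.span_le.mpr
      rintro _ ⟨n, h, rfl⟩
      exact ⟨(W ^ n) (e h), hψgen n h⟩
    have hcl : IsClosed ((LinearMap.range Φiso.toLinearMap : Submodule ℂ K') : Set K') := by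
      have : ((LinearMap.range Φiso.toLinearMap : Submodule ℂ K') : Set K') =
          Set.range Φiso := by
        ext x; simp [LinearMap.mem_range]
      rw [this]; exact hclosed
    have := Submodule.topologicalClosure_minimal _ hle hcl
    rw [hmin'] at this
    exact top_le_iff.mp this
  have hsurj : Function.Surjective Φiso := by
    intro y
    have : y ∈ LinearMap.range Φiso.toLinearMap := hrange ▸ Submodule.mem_top
    obtain ⟨x, hx⟩ := this
    exact ⟨x, hx⟩
  refine ⟨LinearIsometryEquiv.ofSurjective Φiso hsurj, ?_, ?_, ?_⟩
  · intro h
    have h1 : (LinearIsometryEquiv.ofSurjective Φiso hsurj) (e h) = ψ (e h) := rfl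
    have h2 := hψgen 0 h
    simp only [pow_zero, ContinuousLinearMap.one_apply] at h2
    rw [h1, h2]
  · -- intertwining with W : by density
    have hdense : Dense ((Submodule.span ℂ
        {x : K | ∃ (n : ℕ) (h : H), x = (W ^ n) (e h)} : Submodule ℂ K) : Set K) :=
      Submodule.dense_iff_topologicalClosure_eq_top.mpr hmin
    have heq : Set.EqOn (fun x : K => ψ (W x)) (fun x : K => W' (ψ x))
        ((Submodule.span ℂ {x : K | ∃ (n : ℕ) (h : H), x = (W ^ n) (e h)} :
          Submodule ℂ K) : Set K) := by
      intro x hx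
      induction hx using Submodule.span_induction with
      | mem y hy =>
        obtain ⟨n, h, rfl⟩ := hy
        simp only
        have h1 : W ((W ^ n) (e h)) = (W ^ (n + 1)) (e h) := by
          rw [pow_succ', ContinuousLinearMap.mul_apply]
        have h2 : W' ((W' ^ n) (e' h)) = (W' ^ (n + 1)) (e' h) := by
          rw [pow_succ', ContinuousLinearMap.mul_apply]
        rw [h1, hψgen, hψgen, h2]
      | zero => simp
      | add y z hy hz ihy ihz => simp only [map_add, ihy, ihz]
      | smul c y hy ihy => simp only [map_smul, ihy]
    have h3 := Continuous.ext_on hdense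
      (ψ.continuous.comp W.continuous) (W'.continuous.comp ψ.continuous) heq
    intro x
    exact congrFun h3 x
  · -- intertwining with η : by density
    intro a
    have hdense : Dense ((Submodule.span ℂ
        {x : K | ∃ (n : ℕ) (h : H), x = (W ^ n) (e h)} : Submodule ℂ K) : Set K) :=
      Submodule.dense_iff_topologicalClosure_eq_top.mpr hmin
    have hcp := cov_pow α η W hWcov
    have hcp' := cov_pow α η' W' hWcov'
    have heq : Set.EqOn (fun x : K => ψ (η a x)) (fun x : K => η' a (ψ x))
        ((Submodule.span ℂ {x : K | ∃ (n : ℕ) (h : H), x = (W ^ n) (e h)} :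
          Submodule ℂ K) : Set K) := by
      intro x hx
      induction hx using Submodule.span_induction with
      | mem y hy =>
        obtain ⟨n, h, rfl⟩ := hy
        simp only
        have h1 : η a ((W ^ n) (e h)) = (W ^ n) (e (π ((⇑α)^[n] a) h)) := by
          rw [hcp n a (e h)]
          congr 1
          have := congrArg (fun (f : H →L[ℂ] K) => f h) (hrest ((⇑α)^[n] a))
          simpa using this
        have h2 : η' a ((W' ^ n) (e' h)) = (W' ^ n) (e' (π ((⇑α)^[n] a) h)) := by
          rw [hcp' n a (e' h)]
          congr 1
          have := congrArg (fun (f : H →L[ℂ] K') => f h) (hrest' ((⇑α)^[n] a))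
          simpa using this
        rw [h1, hψgen, hψgen, h2]
      | zero => simp
      | add y z hy hz ihy ihz => simp only [map_add, ihy, ihz]
      | smul c y hy ihy => simp only [map_smul, ihy]
    have h3 := Continuous.ext_on hdense
      (ψ.continuous.comp (η a).continuous) ((η' a).continuous.comp ψ.continuous) heq
    intro x
    exact congrFun h3 x
end
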